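/- Let u ∈ BMOA(𝕋), s > 0, and let f ∈ Ker(H_u² - s²I), f ≠ 0, with g = H_u f / s. Then the unimodular function φ = g/conj(f) on the unit circle is independent of the choice of f: if f₁, f₂ ∈ Ker(H_u² - s²I) with g_i = H_u f_i/s, then conj(f₁)·g₂ = conj(f₂)·g₁ a.e. on 𝕋, and |g| = |f| a.e. on 𝕋. -/

import Mathlib

open MeasureTheory Complex Real ComplexConjugate AddCircle

noncomputable section

instance fact2pi : Fact (0 < 2 * π) := ⟨by positivity⟩

abbrev Tc : Type := AddCircle (2 * π)

abbrev haarT : Measure Tc := haarAddCircle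

abbrev HL2 : Type := Lp ℂ 2 haarT

def IsHardy (f : HL2) : Prop := ∀ n : ℤ, n < 0 → fourierCoeff (⇑f) n = 0

def IsHardyFun (u : Tc → ℂ) : Prop := ∀ n : ℤ, n < 0 → fourierCoeff u n = 0

def IsInnerF (θ : Tc → ℂ) : Prop :=
  AEStronglyMeasurable θ haarT ∧ (∀ᵐ x ∂haarT, ‖θ x‖ = 1) ∧ IsHardyFun θ

def IsHankelOp (u : Tc → ℂ) (H : HL2 → HL2) : Prop :=
  MemLp u 2 haarT ∧ IsHardyFun u ∧
  (∃ C : ℝ, ∀ f, ‖H f‖ ≤ C * ‖f‖) ∧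
  (∀ f g, H (f + g) = H f + H g) ∧
  (∀ (c : ℂ) (f : HL2), H (c • f) = conj c • H f) ∧
  (∀ f, IsHardy (H f)) ∧
  (∀ f g : HL2, IsHardy g →
    Integrable (fun x => u x * conj (f x) * conj (g x)) haarT →
    (inner ℂ g (H f) : ℂ) = ∫ x, u x * conj (f x) * conj (g x) ∂haarT)

def IsShiftAdjOf (H K : HL2 → HL2) : Prop :=
  ∀ f, IsHardy (K f) ∧
    ∀ n : ℤ, 0 ≤ n → fourierCoeff (⇑(K f)) n = fourierCoeff (⇑(H f)) (n + 1)

def IsSzego (P : HL2 →L[ℂ] HL2) : Prop :=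
  (∀ f, IsHardy (P f)) ∧ ∀ f g : HL2, IsHardy g → (inner ℂ g (f - P f) : ℂ) = 0

def MemKz (θ : Tc → ℂ) (f : HL2) : Prop :=
  IsHardy f ∧ ∀ h w : HL2, IsHardy h →
    (⇑w =ᵐ[haarT] fun x => fourier 1 x * θ x * h x) → (inner ℂ w f : ℂ) = 0

def MemK (θ : Tc → ℂ) (f : HL2) : Prop :=
  IsHardy f ∧ ∀ h w : HL2, IsHardy h →
    (⇑w =ᵐ[haarT] fun x => θ x * h x) → (inner ℂ w f : ℂ) = 0


namespace AAKaux

lemma fourierCoeff_congr_ae {v w : Tc → ℂ} (h : v =ᵐ[haarT] w) (n : ℤ) :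
    fourierCoeff v n = fourierCoeff w n := by
  unfold fourierCoeff
  exact integral_congr_ae (h.mono fun x hx => by simp [hx])

lemma inner_integral (v w : HL2) : (inner ℂ v w : ℂ) = ∫ x, conj (v x) * w x ∂haarT := by
  rw [MeasureTheory.L2.inner_def]; simp [RCLike.inner_apply, mul_comm]

lemma coeff_eq_inner (w : HL2) (n : ℤ) :
    fourierCoeff (⇑w) n = (inner ℂ (fourierLp 2 n : HL2) w : ℂ) := by
  rw [← fourierBasis_repr, fourierBasis.repr_apply_apply]
  congr 1
  exact congrFun coe_fourierBasis n

lemma parseval (v w : HL2) :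
    (inner ℂ v w : ℂ) = ∑' n : ℤ, conj (fourierCoeff (⇑v) n) * fourierCoeff (⇑w) n := by
  rw [← fourierBasis.repr.inner_map_map v w, lp.inner_eq_tsum]
  simp [RCLike.inner_apply, fourierBasis_repr, mul_comm]

lemma memLp_mul_fourier (n : ℤ) (w : HL2) :
    MemLp (fun x => fourier n x * w x) 2 haarT := by
  refine ⟨((map_continuous (fourier n)).aestronglyMeasurable).mul (Lp.aestronglyMeasurable w), ?_⟩
  have : eLpNorm (fun x => fourier n x * w x) 2 haarT = eLpNorm (⇑w) 2 haarT := by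
    apply eLpNorm_congr_norm_ae
    filter_upwards with x
    simp [norm_mul, Circle.norm_coe]
  rw [this]
  exact (Lp.memLp w).2

def Msh (n : ℤ) (w : HL2) : HL2 := (memLp_mul_fourier n w).toLp _

lemma coe_Msh (n : ℤ) (w : HL2) : ⇑(Msh n w) =ᵐ[haarT] fun x => fourier n x * w x :=
  MemLp.coeFn_toLp _

lemma coeff_Msh (n : ℤ) (w : HL2) (m : ℤ) :
    fourierCoeff (⇑(Msh n w)) m = fourierCoeff (⇑w) (m - n) := by
  rw [fourierCoeff_congr_ae (coe_Msh n w)]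
  unfold fourierCoeff
  congr 1
  funext x
  have h1 : (-(m - n)) = -m + n := by ring
  rw [h1, fourier_add]
  simp [smul_eq_mul]
  ring

lemma coeff_mul_inner (n : ℤ) (w v : HL2) :
    fourierCoeff (fun x => conj (w x) * v x) n = (inner ℂ (Msh n w) v : ℂ) := by
  have h1 : fourierCoeff (fun x => conj (w x) * v x) n
      = ∫ x, conj (fourier n x * w x) * v x ∂haarT := by
    unfold fourierCoeff
    congr 1
    funext x
    simp [smul_eq_mul, ← fourier_neg, map_mul]
    ring
  rw [h1, inner_integral]
  exact (integral_congr_ae ((coe_Msh n w).mono fun x hx => by rw [hx])).symm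

lemma inner_Msh_swap (n : ℤ) (w v : HL2) :
    (inner ℂ (Msh n w) v : ℂ) = inner ℂ w (Msh (-n) v) := by
  rw [inner_integral, inner_integral]
  apply integral_congr_ae
  filter_upwards [coe_Msh n w, coe_Msh (-n) v] with x h1 h2
  rw [h1, h2]
  simp [fourier_neg, map_mul]
  ring

lemma isHardy_E {n : ℤ} (hn : 0 ≤ n) : IsHardy (fourierLp 2 n) := by
  intro m hm
  rw [coeff_eq_inner]
  exact orthonormal_fourier.2 (by omega)

lemma isHardy_Msh {n : ℤ} (hn : 0 ≤ n) {w : HL2} (hw : IsHardy w) : IsHardy (Msh n w) := by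
  intro m hm
  rw [coeff_Msh]
  exact hw _ (by omega)

lemma integrable_conj_mul (f w : HL2) :
    Integrable (fun x => conj (f x) * w x) haarT := by
  refine (show Integrable (fun x => w x * conj (f x)) haarT by simpa [RCLike.inner_apply] using MeasureTheory.L2.integrable_inner (𝕜 := ℂ) f w).congr (ae_of_all _ fun x => mul_comm _ _)

variable {u : Tc → ℂ} {H : HL2 → HL2}

lemma integrable_u_conj (hu : MemLp u 2 haarT) (f : HL2) :
    Integrable (fun x => u x * conj (f x)) haarT := by
  have h1 := integrable_conj_mul f (hu.toLp u)
  refine h1.congr ?_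
  filter_upwards [hu.coeFn_toLp] with x hx
  rw [hx]; ring

lemma integrable_u_conj_conj (hu : MemLp u 2 haarT) (f : HL2) {g : Tc → ℂ}
    (hg : AEStronglyMeasurable g haarT) (hbd : ∀ᵐ x ∂haarT, ‖g x‖ ≤ 1) :
    Integrable (fun x => u x * conj (f x) * conj (g x)) haarT := by
  have heq : (fun x => u x * conj (f x) * conj (g x))
      = fun x => conj (g x) * (u x * conj (f x)) := by funext x; ring
  rw [heq]
  refine Integrable.bdd_mul (c := 1) (integrable_u_conj hu f)
    (continuous_star.comp_aestronglyMeasurable hg) ?_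
  filter_upwards [hbd] with x hx
  simpa using hx

lemma coeffH (hH : IsHankelOp u H) (f : HL2) {n : ℤ} (hn : 0 ≤ n) :
    fourierCoeff (⇑(H f)) n = ∫ x, u x * conj (f x) * conj (fourier n x) ∂haarT := by
  have hint : Integrable (fun x => u x * conj (f x) * conj ((fourierLp 2 n : HL2) x)) haarT := by
    refine integrable_u_conj_conj hH.1 f (Lp.aestronglyMeasurable _) ?_
    filter_upwards [coeFn_fourierLp 2 n] with x hx
    rw [hx]; simp [Circle.norm_coe]
  rw [coeff_eq_inner, hH.2.2.2.2.2.2 f (fourierLp 2 n) (isHardy_E hn) hint]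
  exact integral_congr_ae ((coeFn_fourierLp 2 n).mono fun x hx => by simp only [hx])

lemma coeff_H_Msh (hH : IsHankelOp u H) (f : HL2) {n m : ℤ} (hn : 0 ≤ n) (hm : 0 ≤ m) :
    fourierCoeff (⇑(H (Msh n f))) m = fourierCoeff (⇑(H f)) (m + n) := by
  rw [coeffH hH _ hm, coeffH hH _ (by omega : (0:ℤ) ≤ m + n)]
  refine integral_congr_ae ((coe_Msh n f).mono fun x hx => ?_)
  simp only [hx, fourier_add, map_mul]
  ring

lemma H_sub (hH : IsHankelOp u H) (a b : HL2) : H (a - b) = H a - H b := by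
  have h1 := hH.2.2.2.1 (a - b) b
  rw [sub_add_cancel] at h1
  rw [h1]; abel

lemma H_zero (hH : IsHankelOp u H) : H 0 = 0 := by
  have := H_sub hH 0 0
  simpa using this

lemma H_cont (hH : IsHankelOp u H) : Continuous H := by
  obtain ⟨C, hC⟩ := hH.2.2.1
  have : LipschitzWith (Real.toNNReal C) H := by
    refine LipschitzWith.of_dist_le_mul fun a b => ?_
    rw [dist_eq_norm, dist_eq_norm, ← H_sub hH]
    exact (hC _).trans
      (mul_le_mul_of_nonneg_right (Real.le_coe_toNNReal C) (norm_nonneg _))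
  exact this.continuous

lemma hardy_mem_closure {f : HL2} (hf : IsHardy f) :
    f ∈ closure ((Submodule.span ℂ (Set.range fun k : ℕ => (fourierLp 2 (k : ℤ) : HL2))) : Set HL2) := by
  have hs := hasSum_fourier_series_L2 f
  refine mem_closure_of_tendsto hs ?_
  filter_upwards with s
  refine Submodule.sum_mem _ fun i _ => ?_
  by_cases hi : 0 ≤ i
  · refine Submodule.smul_mem _ _ (Submodule.subset_span ⟨i.toNat, ?_⟩)
    simp [Int.toNat_of_nonneg hi]
  · have h0 : fourierCoeff (⇑f) i = 0 := hf i (by omega)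
    simp [h0]

lemma eq_on_hardy {Φ Ψ : HL2 → ℂ} (hΦ : Continuous Φ) (hΨ : Continuous Ψ)
    (hgen : ∀ k : ℕ, Φ (fourierLp 2 (k : ℤ)) = Ψ (fourierLp 2 (k : ℤ)))
    (h0 : Φ 0 = Ψ 0)
    (hadd : ∀ a b, Φ a = Ψ a → Φ b = Ψ b → Φ (a + b) = Ψ (a + b))
    (hsmul : ∀ (c : ℂ) a, Φ a = Ψ a → Φ (c • a) = Ψ (c • a))
    {f : HL2} (hf : IsHardy f) : Φ f = Ψ f := by
  have hset : ((Submodule.span ℂ (Set.range fun k : ℕ => (fourierLp 2 (k : ℤ) : HL2))) : Set HL2)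
      ⊆ {x | Φ x = Ψ x} := by
    intro x hx
    induction hx using Submodule.span_induction with
    | mem x hx => obtain ⟨k, rfl⟩ := hx; exact hgen k
    | zero => exact h0
    | add a b _ _ ha hb => exact hadd a b ha hb
    | smul c a _ ha => exact hsmul c a ha
  exact (closure_minimal hset (isClosed_eq hΦ hΨ)) (hardy_mem_closure hf)

lemma sym_EE (hH : IsHankelOp u H) (m n : ℕ) :
    (inner ℂ (fourierLp 2 (n : ℤ)) (H (fourierLp 2 (m : ℤ))) : ℂ)
      = inner ℂ (fourierLp 2 (m : ℤ)) (H (fourierLp 2 (n : ℤ))) := by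
  rw [← coeff_eq_inner, ← coeff_eq_inner, coeffH hH _ (Int.natCast_nonneg n),
    coeffH hH _ (Int.natCast_nonneg m)]
  refine integral_congr_ae ?_
  filter_upwards [coeFn_fourierLp (T := 2*π) 2 (m : ℤ), coeFn_fourierLp (T := 2*π) 2 (n : ℤ)]
    with x h1 h2
  simp only [h1, h2]
  ring

lemma sym (hH : IsHankelOp u H) (f g : HL2) (hf : IsHardy f) (hg : IsHardy g) :
    (inner ℂ g (H f) : ℂ) = inner ℂ f (H g) := by
  have step2 : ∀ m : ℕ, ∀ g : HL2, IsHardy g →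
      (inner ℂ g (H (fourierLp 2 (m : ℤ))) : ℂ) = inner ℂ (fourierLp 2 (m : ℤ)) (H g) := by
    intro m g hg
    refine eq_on_hardy (Φ := fun g => inner ℂ g (H (fourierLp 2 (m : ℤ))))
      (Ψ := fun g => inner ℂ (fourierLp 2 (m : ℤ)) (H g)) ?_ ?_ ?_ ?_ ?_ ?_ hg
    · exact Continuous.inner continuous_id continuous_const
    · exact Continuous.inner continuous_const (H_cont hH)
    · intro k; exact sym_EE hH m k
    · simp [H_zero hH]
    · intro a b ha hb
      rw [inner_add_left, hH.2.2.2.1 a b, inner_add_right, ha, hb]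
    · intro c a ha
      rw [inner_smul_left, hH.2.2.2.2.1 c a, inner_smul_right, ha]
  refine eq_on_hardy (Φ := fun f => inner ℂ g (H f)) (Ψ := fun f => inner ℂ f (H g))
    ?_ ?_ ?_ ?_ ?_ ?_ hf
  · exact Continuous.inner continuous_const (H_cont hH)
  · exact Continuous.inner continuous_id continuous_const
  · intro k; exact step2 k g hg
  · simp [H_zero hH]
  · intro a b ha hb
    rw [hH.2.2.2.1 a b, inner_add_right, inner_add_left, ha, hb]
  · intro c a ha
    rw [hH.2.2.2.2.1 c a, inner_smul_right, inner_smul_left, ha]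

lemma sym_shift (hH : IsHankelOp u H) (p q : HL2) (hp : IsHardy p) (hq : IsHardy q)
    {n : ℤ} (hn : 0 ≤ n) :
    (inner ℂ (Msh n p) (H q) : ℂ) = inner ℂ (Msh n q) (H p) := by
  rw [sym hH q (Msh n p) hq (isHardy_Msh hn hp), parseval, parseval]
  rw [← (Equiv.addRight n).tsum_eq
    (fun m => conj (fourierCoeff (⇑(Msh n q)) m) * fourierCoeff (⇑(H p)) m)]
  refine tsum_congr fun k => ?_
  simp only [Equiv.coe_addRight, coeff_Msh, add_sub_cancel_right]
  rcases le_or_gt 0 k with hk | hk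
  · rw [coeff_H_Msh hH p hn hk]
  · rw [hq k hk]
    simp

lemma pairing_zero {D : Tc → ℂ} (hD : Integrable D haarT)
    (h : ∀ n : ℤ, fourierCoeff D n = 0) (c : C(Tc, ℂ)) :
    ∫ x, c x * D x ∂haarT = 0 := by
  have hint : ∀ c : C(Tc, ℂ), Integrable (fun x => c x * D x) haarT := fun c =>
    hD.bdd_mul (c := ‖c‖) (map_continuous c).aestronglyMeasurable (ae_of_all _ fun x => c.norm_coe_le_norm x)
  set Λ₀ : C(Tc, ℂ) →ₗ[ℂ] ℂ :=
    { toFun := fun c => ∫ x, c x * D x ∂haarT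
      map_add' := fun a b => by
        simp only [ContinuousMap.add_apply, add_mul]
        exact integral_add (hint a) (hint b)
      map_smul' := fun r a => by
        simp only [ContinuousMap.smul_apply, smul_eq_mul, mul_assoc, RingHom.id_apply]
        exact integral_const_mul r _ } with hΛ₀
  have hbound : ∀ c, ‖Λ₀ c‖ ≤ (∫ x, ‖D x‖ ∂haarT) * ‖c‖ := by
    intro c
    calc ‖∫ x, c x * D x ∂haarT‖ ≤ ∫ x, ‖c x * D x‖ ∂haarT := norm_integral_le_integral_norm _
      _ ≤ ∫ x, ‖c‖ * ‖D x‖ ∂haarT := by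
          refine integral_mono (hint c).norm (hD.norm.const_mul _) fun x => ?_
          rw [norm_mul]
          exact mul_le_mul_of_nonneg_right (c.norm_coe_le_norm x) (norm_nonneg _)
      _ = (∫ x, ‖D x‖ ∂haarT) * ‖c‖ := by rw [integral_const_mul]; ring
  set Λ : C(Tc, ℂ) →L[ℂ] ℂ := LinearMap.mkContinuous Λ₀ _ hbound with hΛ
  have hker : Submodule.span ℂ (Set.range (fourier (T := 2 * π))) ≤ LinearMap.ker (Λ : C(Tc, ℂ) →ₗ[ℂ] ℂ) := by
    rw [Submodule.span_le]
    rintro _ ⟨k, rfl⟩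
    simp only [SetLike.mem_coe, LinearMap.mem_ker]
    show ∫ x, fourier k x * D x ∂haarT = 0
    have hk := h (-k)
    unfold fourierCoeff at hk
    simpa [smul_eq_mul] using hk
  have hclosed : IsClosed ((LinearMap.ker (Λ : C(Tc, ℂ) →ₗ[ℂ] ℂ) : Submodule ℂ C(Tc, ℂ)) : Set C(Tc, ℂ)) :=
    ContinuousLinearMap.isClosed_ker Λ
  have hmin := Submodule.topologicalClosure_minimal _ hker hclosed
  rw [span_fourier_closure_eq_top (T := 2 * π)] at hmin
  exact hmin Submodule.mem_top

lemma ae_zero_of_coeff_zero {D : Tc → ℂ} (hD : Integrable D haarT)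
    (h : ∀ n : ℤ, fourierCoeff D n = 0) : D =ᵐ[haarT] 0 := by
  refine ae_eq_zero_of_forall_setIntegral_isClosed_eq_zero hD fun s hs => ?_
  rcases s.eq_empty_or_nonempty with rfl | hne
  · simp
  set c : ℕ → Tc → ℝ := fun k x => 1 - min 1 ((k : ℝ) * Metric.infDist x s) with hc
  have hc01 : ∀ k x, 0 ≤ c k x ∧ c k x ≤ 1 := by
    intro k x
    have h1 : 0 ≤ (k : ℝ) * Metric.infDist x s :=
      mul_nonneg (Nat.cast_nonneg k) Metric.infDist_nonneg
    constructor
    · simp [hc]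
    · simp [hc]; positivity
  have hcont : ∀ k, Continuous fun x => ((c k x : ℝ) : ℂ) := by
    intro k
    refine Complex.continuous_ofReal.comp ?_
    exact continuous_const.sub (continuous_const.min
      (continuous_const.mul (Metric.continuous_infDist_pt s)))
  have hck : ∀ k, ∫ x, ((c k x : ℝ) : ℂ) * D x ∂haarT = 0 := fun k =>
    pairing_zero hD h ⟨fun x => ((c k x : ℝ) : ℂ), hcont k⟩
  have hlim : Filter.Tendsto (fun k => ∫ x, ((c k x : ℝ) : ℂ) * D x ∂haarT) Filter.atTop
      (nhds (∫ x, s.indicator (fun _ => (1 : ℂ)) x * D x ∂haarT)) := by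
    refine tendsto_integral_of_dominated_convergence (fun x => ‖D x‖)
      (fun k => (hcont k).aestronglyMeasurable.mul hD.1) hD.norm ?_ ?_
    · intro k
      filter_upwards with x
      rw [norm_mul]
      have := hc01 k x
      calc ‖((c k x : ℝ) : ℂ)‖ * ‖D x‖ ≤ 1 * ‖D x‖ := by
            refine mul_le_mul_of_nonneg_right ?_ (norm_nonneg _)
            rw [Complex.norm_real, Real.norm_eq_abs, abs_le]
            constructor <;> linarith [this.1, this.2]
        _ = ‖D x‖ := one_mul _
    · filter_upwards with x
      by_cases hx : x ∈ s
      · have : ∀ k, ((c k x : ℝ) : ℂ) * D x = s.indicator (fun _ => (1 : ℂ)) x * D x := by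
          intro k
          have h0 : Metric.infDist x s = 0 := Metric.infDist_zero_of_mem hx
          simp [hc, h0, Set.indicator_of_mem hx]
        simpa [this] using tendsto_const_nhds
      · have hd : 0 < Metric.infDist x s := (hs.notMem_iff_infDist_pos hne).mp hx
        have hev : ∀ᶠ k in Filter.atTop, s.indicator (fun _ => (1 : ℂ)) x * D x
            = ((c k x : ℝ) : ℂ) * D x := by
          filter_upwards [Filter.eventually_ge_atTop ⌈(Metric.infDist x s)⁻¹⌉₊] with k hk
          have h1 : 1 ≤ (k : ℝ) * Metric.infDist x s := by
            have h2 : ((Metric.infDist x s)⁻¹ : ℝ) ≤ (k : ℝ) :=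
              (Nat.le_ceil _).trans (Nat.cast_le.mpr hk)
            calc (1 : ℝ) = (Metric.infDist x s)⁻¹ * Metric.infDist x s := by
                  field_simp
              _ ≤ (k : ℝ) * Metric.infDist x s := by
                  exact mul_le_mul_of_nonneg_right h2 hd.le
          have : c k x = 0 := by simp [hc, min_eq_left h1]
          simp [this, Set.indicator_of_notMem hx]
        exact Filter.Tendsto.congr' hev tendsto_const_nhds
  have heq : (fun x => s.indicator (fun _ => (1 : ℂ)) x * D x) = s.indicator D := by
    funext x
    by_cases hx : x ∈ s <;> simp [Set.indicator_apply, hx]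
  have hzero : Filter.Tendsto (fun k => ∫ x, ((c k x : ℝ) : ℂ) * D x ∂haarT) Filter.atTop
      (nhds (0 : ℂ)) := by
    simp only [hck]
    exact tendsto_const_nhds
  have h0 := tendsto_nhds_unique hlim hzero
  rw [heq, integral_indicator hs.measurableSet] at h0
  exact h0

lemma isHardy_of_eigen (hH : IsHankelOp u H) {s : ℝ} (hs : 0 < s) {f : HL2}
    (hf : H (H f) = ((s : ℂ) ^ 2) • f) : IsHardy f := by
  intro m hm
  have h1 : fourierCoeff (⇑(H (H f))) m = 0 := hH.2.2.2.2.2.1 (H f) m hm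
  rw [hf] at h1
  have h2 : fourierCoeff (⇑(((s : ℂ) ^ 2) • f)) m
      = ((s : ℂ) ^ 2) * fourierCoeff (⇑f) m := by
    rw [fourierCoeff_congr_ae (Lp.coeFn_smul ((s : ℂ) ^ 2) f)]
    exact fourierCoeff.const_smul (⇑f) _ m
  rw [h2] at h1
  have hs0 : ((s : ℂ) ^ 2) ≠ 0 := by
    simp [pow_eq_zero_iff]
    exact_mod_cast hs.ne'
  exact (mul_eq_zero.mp h1).resolve_left hs0

lemma pair_ae (hH : IsHankelOp u H) {s : ℝ} (hs : 0 < s) (f₁ f₂ : HL2)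
    (h₁ : H (H f₁) = ((s : ℂ) ^ 2) • f₁) (h₂ : H (H f₂) = ((s : ℂ) ^ 2) • f₂) :
    (fun x => conj (f₁ x) * (H f₂) x) =ᵐ[haarT] fun x => conj (f₂ x) * (H f₁) x := by
  have hs2 : ((s : ℂ) ^ 2) ≠ 0 := by
    simp [pow_eq_zero_iff]
    exact_mod_cast hs.ne'
  have hf₁ : IsHardy f₁ := isHardy_of_eigen hH hs h₁
  have hf₂ : IsHardy f₂ := isHardy_of_eigen hH hs h₂
  have hg₁ : IsHardy (H f₁) := hH.2.2.2.2.2.1 f₁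
  have hg₂ : IsHardy (H f₂) := hH.2.2.2.2.2.1 f₂
  have key : ∀ n : ℤ, (inner ℂ (Msh n f₁) (H f₂) : ℂ) = inner ℂ (Msh n f₂) (H f₁) := by
    intro n
    rcases le_or_gt 0 n with hn | hn
    · exact sym_shift hH f₁ f₂ hf₁ hf₂ hn
    · have hν : (0 : ℤ) ≤ -n := by omega
      have e2 : (inner ℂ (Msh (-n) (H f₂)) f₁ : ℂ) = inner ℂ (Msh (-n) (H f₁)) f₂ := by
        have hstep : (inner ℂ (Msh (-n) (H f₂)) (H (H f₁)) : ℂ)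
            = inner ℂ (Msh (-n) (H f₁)) (H (H f₂)) := sym_shift hH (H f₂) (H f₁) hg₂ hg₁ hν
        rw [h₁, h₂, inner_smul_right, inner_smul_right] at hstep
        exact mul_left_cancel₀ hs2 hstep
      calc (inner ℂ (Msh n f₁) (H f₂) : ℂ)
          = inner ℂ f₁ (Msh (-n) (H f₂)) := inner_Msh_swap n f₁ (H f₂)
        _ = conj (inner ℂ (Msh (-n) (H f₂)) f₁ : ℂ) := (inner_conj_symm _ _).symm
        _ = conj (inner ℂ (Msh (-n) (H f₁)) f₂ : ℂ) := by rw [e2]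
        _ = inner ℂ f₂ (Msh (-n) (H f₁)) := inner_conj_symm _ _
        _ = inner ℂ (Msh n f₂) (H f₁) := (inner_Msh_swap n f₂ (H f₁)).symm
  have hint1 : Integrable (fun x => conj (f₁ x) * (H f₂) x) haarT :=
    integrable_conj_mul f₁ (H f₂)
  have hint2 : Integrable (fun x => conj (f₂ x) * (H f₁) x) haarT :=
    integrable_conj_mul f₂ (H f₁)
  have hD : Integrable (fun x => conj (f₁ x) * (H f₂) x - conj (f₂ x) * (H f₁) x) haarT :=
    hint1.sub hint2
  have hcoeff : ∀ n : ℤ,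
      fourierCoeff (fun x => conj (f₁ x) * (H f₂) x - conj (f₂ x) * (H f₁) x) n = 0 := by
    intro n
    have hsplit : fourierCoeff (fun x => conj (f₁ x) * (H f₂) x - conj (f₂ x) * (H f₁) x) n
        = fourierCoeff (fun x => conj (f₁ x) * (H f₂) x) n
          - fourierCoeff (fun x => conj (f₂ x) * (H f₁) x) n := by
      unfold fourierCoeff
      rw [← integral_sub]
      · congr 1
        funext x
        simp [smul_eq_mul]
        ring
      · exact hint1.bdd_mul (map_continuous (fourier (-n))).aestronglyMeasurable
          (c := 1) (ae_of_all _ fun x => by simp [Circle.norm_coe])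
      · exact hint2.bdd_mul (map_continuous (fourier (-n))).aestronglyMeasurable
          (c := 1) (ae_of_all _ fun x => by simp [Circle.norm_coe])
    rw [hsplit, coeff_mul_inner, coeff_mul_inner, key n, sub_self]
  have hz := ae_zero_of_coeff_zero hD hcoeff
  filter_upwards [hz] with x hx
  have : conj (f₁ x) * (H f₂) x - conj (f₂ x) * (H f₁) x = 0 := hx
  linear_combination this

end AAKaux

/-- the AAK unimodular symbol.  For `f₁, f₂ ∈ Ker(H_u² - s²I)` nonzero with
`g_i = H_u f_i / s`, one has `conj(f₁)·g₂ = conj(f₂)·g₁` a.e. on the circle (so the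
unimodular function `φ = g/conj(f)` does not depend on `f`), and `|H_u f| = s|f|` a.e. -/
theorem AAK_unimodular_symbol
    (u : Tc → ℂ) (H : HL2 → HL2) (hH : IsHankelOp u H)
    (s : ℝ) (hs : 0 < s)
    (f₁ f₂ : HL2)
    (h₁ : H (H f₁) = ((s : ℂ) ^ 2) • f₁) (h₂ : H (H f₂) = ((s : ℂ) ^ 2) • f₂)
    (hf₁ : f₁ ≠ 0) (hf₂ : f₂ ≠ 0) :
    ((fun x => conj (f₁ x) * (H f₂) x) =ᵐ[haarT] fun x => conj (f₂ x) * (H f₁) x) ∧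
    (∀ᵐ x ∂haarT, ‖(H f₁) x‖ = s * ‖f₁ x‖) := by
  have hsC : (s : ℂ) ≠ 0 := by exact_mod_cast hs.ne'
  refine ⟨AAKaux.pair_ae hH hs f₁ f₂ h₁ h₂, ?_⟩
  set f₂' : HL2 := ((s : ℂ)⁻¹) • H f₁ with hf₂'def
  have hconjinv : conj ((s : ℂ)⁻¹) = (s : ℂ)⁻¹ := by
    rw [map_inv₀, Complex.conj_ofReal]
  have HF2' : H f₂' = (s : ℂ) • f₁ := by
    rw [hf₂'def, hH.2.2.2.2.1, hconjinv, h₁, smul_smul]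
    congr 1
    field_simp
  have h₂' : H (H f₂') = ((s : ℂ) ^ 2) • f₂' := by
    rw [HF2', hH.2.2.2.2.1, Complex.conj_ofReal, hf₂'def, smul_smul]
    congr 1
    field_simp
  have hpair := AAKaux.pair_ae hH hs f₁ f₂' h₁ h₂'
  have hb : ⇑(H f₂') =ᵐ[haarT] fun x => (s : ℂ) * f₁ x := by
    rw [HF2']
    filter_upwards [Lp.coeFn_smul (s : ℂ) f₁] with x hx
    rw [hx]
    simp
  have ha : ⇑f₂' =ᵐ[haarT] fun x => (s : ℂ)⁻¹ * (H f₁) x := by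
    rw [hf₂'def]
    filter_upwards [Lp.coeFn_smul ((s : ℂ)⁻¹) (H f₁)] with x hx
    rw [hx]
    simp
  filter_upwards [hpair, ha, hb] with x hx hax hbx
  rw [hbx, hax] at hx
  have hnorm := congrArg (fun z => ‖z‖) hx
  simp only [norm_mul, RCLike.norm_conj, norm_inv, Complex.norm_real, Real.norm_eq_abs,
    abs_of_pos hs] at hnorm
  field_simp [hs.ne'] at hnorm
  have hA : 0 ≤ s * ‖f₁ x‖ := by positivity
  have hsq : ‖(H f₁) x‖ * ‖(H f₁) x‖ = (s * ‖f₁ x‖) * (s * ‖f₁ x‖) := by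
    linear_combination -hnorm
  exact (mul_self_inj (norm_nonneg _) hA).mp hsq

end
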